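/- Let l ≥ 4 and set X := H_{ξ₃η₄} = L_{η₄}∘∂_{η₃} − L_{ξ₃}∘∂_{ξ₄} (even) and D := H_{η₁η₂η₃} (odd). Then the commutator [X, D] = X∘D − D∘X equals H_{η₁η₂η₄}, and [X, [X, D]] = 0. This realizes the relation (ad ξ₃η₄)²(η₁η₂η₃) = 0 between the generators of n₊ of o(2l) and the extra generator Y = H_{η₁η₂η₃} of h(0|2l) stated in the paper (§2.1.2), together with the intermediate value of the first bracket. -/

import Mathlib

/-- The exterior algebra Λ of ℂ^{2l}, with generators indexed by
`Fin l ⊕ Fin l` (left = ξ's, right = η's). -/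
noncomputable abbrev Lam (l : ℕ) := ExteriorAlgebra ℂ ((Fin l ⊕ Fin l) → ℂ)

/-- The generator of Λ corresponding to index `a` (image of the standard basis). -/
noncomputable def gen (l : ℕ) (a : Fin l ⊕ Fin l) : Lam l :=
  ExteriorAlgebra.ι ℂ (Pi.single a 1)

/-- The generator ξᵢ. -/
noncomputable def xiv (l : ℕ) (i : Fin l) : Lam l := gen l (Sum.inl i)

/-- The generator ηᵢ. -/
noncomputable def etav (l : ℕ) (i : Fin l) : Lam l := gen l (Sum.inr i)

/-- L_g : left exterior multiplication by g. -/
noncomputable def Lmul (l : ℕ) (g : Lam l) : Module.End ℂ (Lam l) :=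
  LinearMap.mulLeft ℂ g

/-- `IsContraction l a D` says that `D` is the contraction ∂_ζ with the dual of
the generator ζ indexed by `a`: it kills 1, sends the generator indexed by `b`
to δ_{ab}·1, and satisfies ∂(xy) = ∂(x)y + (−1)ᵖ x ∂(y) whenever x is a product
of p generators. -/
def IsContraction (l : ℕ) (a : Fin l ⊕ Fin l) (D : Module.End ℂ (Lam l)) : Prop :=
  D 1 = 0 ∧
  (∀ b, D (gen l b) = if a = b then 1 else 0) ∧
  (∀ (p : ℕ) (g : Fin p → (Fin l ⊕ Fin l)) (y : Lam l),
    D ((List.ofFn fun k => gen l (g k)).prod * y) =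
      D ((List.ofFn fun k => gen l (g k)).prod) * y +
        ((-1 : ℂ) ^ p) • ((List.ofFn fun k => gen l (g k)).prod * D y))

/-- The Hamiltonian vector field H_f = Σᵢ (L_{∂_{ξᵢ}f} ∘ ∂_{ηᵢ} + L_{∂_{ηᵢ}f} ∘ ∂_{ξᵢ}),
realized as an endomorphism of Λ; `pd a` is the contraction operator ∂ with the
generator indexed by `a`. -/
noncomputable def Ham (l : ℕ) (pd : (Fin l ⊕ Fin l) → Module.End ℂ (Lam l))
    (f : Lam l) : Module.End ℂ (Lam l) :=
  ∑ i : Fin l,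
    (Lmul l (pd (Sum.inl i) f) ∘ₗ pd (Sum.inr i) +
     Lmul l (pd (Sum.inr i) f) ∘ₗ pd (Sum.inl i))

section Dev
variable {l : ℕ} {pd : (Fin l ⊕ Fin l) → Module.End ℂ (Lam l)}

lemma key (hpd : ∀ a, IsContraction l a (pd a)) (a b : Fin l ⊕ Fin l) (y : Lam l) :
    pd a (gen l b * y) = (if a = b then y else 0) - gen l b * pd a y := by
  have h3 := (hpd a).2.2 1 (fun _ => b) y
  have h2 := (hpd a).2.1 b
  simp only [List.ofFn_succ, List.ofFn_zero, List.prod_cons, List.prod_nil, mul_one,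
    pow_one, neg_one_smul, h2, ite_mul, one_mul, zero_mul] at h3
  rw [h3, sub_eq_add_neg]


lemma single_decomp (v : (Fin l ⊕ Fin l) → ℂ) :
    v = ∑ b, v b • (Pi.single b 1 : (Fin l ⊕ Fin l) → ℂ) := by
  ext j
  simp [Pi.single_apply, Finset.sum_ite_eq']

lemma keyI (hpd : ∀ a, IsContraction l a (pd a)) (a : Fin l ⊕ Fin l)
    (v : (Fin l ⊕ Fin l) → ℂ) (y : Lam l) :
    pd a (ExteriorAlgebra.ι ℂ v * y) = v a • y - ExteriorAlgebra.ι ℂ v * pd a y := by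
  have hv : ExteriorAlgebra.ι ℂ v = ∑ b, v b • gen l b := by
    conv_lhs => rw [single_decomp v]
    simp [gen, map_sum]
  rw [hv, Finset.sum_mul, map_sum]
  have h1 : ∀ b, pd a ((v b • gen l b) * y) =
      (if a = b then v b • y else 0) - v b • (gen l b * pd a y) := by
    intro b
    rw [smul_mul_assoc, map_smul, key hpd, smul_sub, smul_ite, smul_zero]
  simp_rw [h1]
  rw [Finset.sum_sub_distrib, Finset.sum_ite_eq, Finset.sum_mul]
  simp [smul_mul_assoc]

lemma pdpd (hpd : ∀ a, IsContraction l a (pd a)) (a b : Fin l ⊕ Fin l) :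
    pd a ∘ₗ pd b + pd b ∘ₗ pd a = 0 := by
  suffices h : ∀ (x : Lam l), ∀ y, pd a (pd b (x * y)) + pd b (pd a (x * y)) =
      x * (pd a (pd b y) + pd b (pd a y)) by
    refine LinearMap.ext fun x => ?_
    have h1 := h x 1
    rw [mul_one] at h1
    simp only [LinearMap.add_apply, LinearMap.comp_apply, LinearMap.zero_apply, h1,
      (hpd a).1, (hpd b).1, map_zero, add_zero, mul_zero]
  intro x
  induction x using ExteriorAlgebra.induction with
  | algebraMap r =>
    intro y
    simp only [Algebra.algebraMap_eq_smul_one, smul_mul_assoc, one_mul, map_smul, smul_add]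
  | ι v =>
    intro y
    simp only [keyI hpd, map_sub, map_smul, mul_add]
    abel
  | mul x y hx hy =>
    intro z
    rw [mul_assoc, hx, hy, mul_assoc]
  | add x y hx hy =>
    intro z
    simp only [add_mul, map_add]
    rw [add_add_add_comm, hx z, hy z]


lemma Lmul_zero : Lmul l (0 : Lam l) = 0 := by
  refine LinearMap.ext fun y => ?_
  simp [Lmul]

lemma Lmul_mul (g h : Lam l) : Lmul l (g * h) = Lmul l g * Lmul l h := by
  refine LinearMap.ext fun y => ?_
  simp [Lmul, mul_assoc]

lemma Lmul_neg (g : Lam l) : Lmul l (-g) = -(Lmul l g) := by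
  refine LinearMap.ext fun y => ?_
  simp [Lmul]

lemma pd_gen (hpd : ∀ a, IsContraction l a (pd a)) (a b : Fin l ⊕ Fin l) :
    pd a (gen l b) = if a = b then 1 else 0 := (hpd a).2.1 b

lemma pd_two (hpd : ∀ a, IsContraction l a (pd a)) (a b c : Fin l ⊕ Fin l) :
    pd a (gen l b * gen l c) =
      (if a = b then gen l c else 0) - (if a = c then gen l b else 0) := by
  rw [key hpd, pd_gen hpd, mul_ite, mul_one, mul_zero]

lemma pd_three (hpd : ∀ a, IsContraction l a (pd a)) (a b c d : Fin l ⊕ Fin l) :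
    pd a (gen l b * gen l c * gen l d) =
      ((if a = b then gen l c * gen l d else 0)
        - (if a = c then gen l b * gen l d else 0))
        + (if a = d then gen l b * gen l c else 0) := by
  rw [mul_assoc, key hpd, pd_two hpd, mul_sub, mul_ite, mul_ite, mul_zero]
  abel

lemma relPP (hpd : ∀ a, IsContraction l a (pd a)) (a b : Fin l ⊕ Fin l) :
    pd a * pd b = -(pd b * pd a) := by
  have h := pdpd hpd a b
  rw [← Module.End.mul_eq_comp, ← Module.End.mul_eq_comp] at h
  exact eq_neg_of_add_eq_zero_left h

lemma sqP (hpd : ∀ a, IsContraction l a (pd a)) (a : Fin l ⊕ Fin l) :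
    pd a * pd a = 0 := by
  have h := relPP hpd a a
  have h2 : (2 : ℂ) • (pd a * pd a) = 0 := by
    rw [two_smul]
    nth_rewrite 1 [h]
    abel
  exact (smul_eq_zero.mp h2).resolve_left (by norm_num)

lemma relLL (a b : Fin l ⊕ Fin l) :
    Lmul l (gen l a) * Lmul l (gen l b) = -(Lmul l (gen l b) * Lmul l (gen l a)) := by
  have h := ExteriorAlgebra.ι_add_mul_swap (R := ℂ) ((Pi.single a 1 : (Fin l ⊕ Fin l) → ℂ)) (Pi.single b 1)
  have h2 : gen l a * gen l b = -(gen l b * gen l a) := by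
    rw [eq_neg_iff_add_eq_zero]
    exact h
  rw [← Lmul_mul, h2, Lmul_neg, Lmul_mul]

lemma sqL (a : Fin l ⊕ Fin l) : Lmul l (gen l a) * Lmul l (gen l a) = 0 := by
  rw [← Lmul_mul]
  have : gen l a * gen l a = 0 := ExteriorAlgebra.ι_sq_zero _
  rw [this, Lmul_zero]

lemma relPL (hpd : ∀ a, IsContraction l a (pd a)) (a b : Fin l ⊕ Fin l) :
    pd a * Lmul l (gen l b) =
      (if a = b then (1 : Module.End ℂ (Lam l)) else 0) - Lmul l (gen l b) * pd a := by
  refine LinearMap.ext fun y => ?_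
  simp only [Module.End.mul_apply, LinearMap.sub_apply, Lmul, LinearMap.mulLeft_apply,
    key hpd]
  by_cases hab : a = b <;> simp [hab]


lemma sum_two {β : Type*} [AddCommMonoid β] {n : ℕ} (f : Fin n → β) (i j : Fin n)
    (hij : i ≠ j) (h : ∀ k, k ≠ i → k ≠ j → f k = 0) : ∑ k, f k = f i + f j := by
  rw [← Finset.sum_pair hij]
  refine (Finset.sum_subset (Finset.subset_univ _) ?_).symm
  intro k _ hk
  simp only [Finset.mem_insert, Finset.mem_singleton, not_or] at hk
  exact h k hk.1 hk.2

lemma sum_three {β : Type*} [AddCommMonoid β] {n : ℕ} (f : Fin n → β) (i j m : Fin n)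
    (hij : i ≠ j) (him : i ≠ m) (hjm : j ≠ m)
    (h : ∀ k, k ≠ i → k ≠ j → k ≠ m → f k = 0) : ∑ k, f k = f i + (f j + f m) := by
  have : ({i, j, m} : Finset (Fin n)).sum f = f i + (f j + f m) := by
    rw [Finset.sum_insert (by simp [hij, him]), Finset.sum_pair hjm]
  rw [← this]
  refine (Finset.sum_subset (Finset.subset_univ _) ?_).symm
  intro k _ hk
  simp only [Finset.mem_insert, Finset.mem_singleton, not_or] at hk
  exact h k hk.1 hk.2.1 hk.2.2

lemma hamX (hpd : ∀ a, IsContraction l a (pd a)) (hl : 4 ≤ l) :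
    Ham l pd (xiv l ⟨2, by linarith⟩ * etav l ⟨3, by linarith⟩) =
      Lmul l (etav l ⟨3, by linarith⟩) ∘ₗ pd (Sum.inr ⟨2, by linarith⟩)
        - Lmul l (xiv l ⟨2, by linarith⟩) ∘ₗ pd (Sum.inl ⟨3, by linarith⟩) := by
  have h23 : (⟨2, by linarith⟩ : Fin l) ≠ ⟨3, by linarith⟩ := by simp [Fin.ext_iff]
  rw [Ham, sum_two _ ⟨2, by linarith⟩ ⟨3, by linarith⟩ h23 ?_]
  · simp only [xiv, etav, pd_two hpd]
    simp [h23, h23.symm, Lmul_zero, Lmul_neg, sub_eq_add_neg]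
  · intro k hk2 hk3
    simp only [xiv, etav, pd_two hpd]
    simp [hk2, hk3, Lmul_zero]


lemma hamEta3 (hpd : ∀ a, IsContraction l a (pd a)) (a b c : Fin l)
    (hab : a ≠ b) (hac : a ≠ c) (hbc : b ≠ c) :
    Ham l pd (etav l a * etav l b * etav l c) =
      Lmul l (etav l b * etav l c) ∘ₗ pd (Sum.inl a)
        - Lmul l (etav l a * etav l c) ∘ₗ pd (Sum.inl b)
        + Lmul l (etav l a * etav l b) ∘ₗ pd (Sum.inl c) := by
  rw [Ham, sum_three _ a b c hab hac hbc ?_]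
  · simp only [etav, pd_three hpd]
    simp [hab, hab.symm, hac, hac.symm, hbc, hbc.symm, Lmul_zero, Lmul_neg, sub_eq_add_neg]
    abel
  · intro k hka hkb hkc
    simp only [etav, pd_three hpd]
    simp [hka, hkb, hkc, Lmul_zero]


lemma swap3 {A : Type*} [Ring A] {a b : A} (h : a * b = -(b * a)) (x : A) :
    a * (b * x) = -(b * (a * x)) := by
  rw [← mul_assoc, h, neg_mul, mul_assoc]

lemma unit3 {A : Type*} [Ring A] {a b : A} (h : a * b = 1 - b * a) (x : A) :
    a * (b * x) = x - b * (a * x) := by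
  rw [← mul_assoc, h, sub_mul, one_mul, mul_assoc]

lemma sq3 {A : Type*} [Ring A] {a : A} (h : a * a = 0) (x : A) :
    a * (a * x) = 0 := by
  rw [← mul_assoc, h, zero_mul]

end Dev


set_option maxHeartbeats 3200000 in
/-- for l ≥ 4, with X = H_{ξ₃η₄} = L_{η₄}∘∂_{η₃} − L_{ξ₃}∘∂_{ξ₄}
(even) and D = H_{η₁η₂η₃} (odd), the commutator [X, D] = X∘D − D∘X equals
H_{η₁η₂η₄}, and [X, [X, D]] = 0, realizing the relation
(ad ξ₃η₄)²(η₁η₂η₃) = 0 of §2.1.2. (Indices 0-based.) -/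
theorem ham_ad_squared (l : ℕ) (hl : 4 ≤ l)
    (pd : (Fin l ⊕ Fin l) → Module.End ℂ (Lam l))
    (hpd : ∀ a, IsContraction l a (pd a))
    (X D : Module.End ℂ (Lam l))
    (hX : X = Ham l pd (xiv l ⟨2, by omega⟩ * etav l ⟨3, by omega⟩))
    (hD : D = Ham l pd (etav l ⟨0, by omega⟩ * etav l ⟨1, by omega⟩ * etav l ⟨2, by omega⟩)) :
    X = Lmul l (etav l ⟨3, by omega⟩) ∘ₗ pd (Sum.inr ⟨2, by omega⟩)
        - Lmul l (xiv l ⟨2, by omega⟩) ∘ₗ pd (Sum.inl ⟨3, by omega⟩) ∧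
    X ∘ₗ D - D ∘ₗ X =
      Ham l pd (etav l ⟨0, by omega⟩ * etav l ⟨1, by omega⟩ * etav l ⟨3, by omega⟩) ∧
    X ∘ₗ (X ∘ₗ D - D ∘ₗ X) - (X ∘ₗ D - D ∘ₗ X) ∘ₗ X = 0 := by
  have hXn : X = Lmul l (gen l (Sum.inr (⟨3, by omega⟩ : Fin l))) * pd (Sum.inr (⟨2, by omega⟩ : Fin l))
      - Lmul l (gen l (Sum.inl (⟨2, by omega⟩ : Fin l))) * pd (Sum.inl (⟨3, by omega⟩ : Fin l)) := by
    rw [hX, hamX hpd hl]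
    rfl
  have hDn : D = Lmul l (gen l (Sum.inr (⟨1, by omega⟩ : Fin l))) * Lmul l (gen l (Sum.inr (⟨2, by omega⟩ : Fin l))) * pd (Sum.inl (⟨0, by omega⟩ : Fin l))
      - Lmul l (gen l (Sum.inr (⟨0, by omega⟩ : Fin l))) * Lmul l (gen l (Sum.inr (⟨2, by omega⟩ : Fin l))) * pd (Sum.inl (⟨1, by omega⟩ : Fin l))
      + Lmul l (gen l (Sum.inr (⟨0, by omega⟩ : Fin l))) * Lmul l (gen l (Sum.inr (⟨1, by omega⟩ : Fin l))) * pd (Sum.inl (⟨2, by omega⟩ : Fin l)) := by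
    rw [hD, hamEta3 hpd _ _ _ (by simp [Fin.ext_iff]) (by simp [Fin.ext_iff]) (by simp [Fin.ext_iff])]
    simp only [etav, Lmul_mul, Module.End.mul_eq_comp]
  have hEn : Ham l pd (etav l (⟨0, by omega⟩ : Fin l) * etav l ⟨1, by omega⟩ * etav l ⟨3, by omega⟩)
      = Lmul l (gen l (Sum.inr (⟨1, by omega⟩ : Fin l))) * Lmul l (gen l (Sum.inr (⟨3, by omega⟩ : Fin l))) * pd (Sum.inl (⟨0, by omega⟩ : Fin l))
      - Lmul l (gen l (Sum.inr (⟨0, by omega⟩ : Fin l))) * Lmul l (gen l (Sum.inr (⟨3, by omega⟩ : Fin l))) * pd (Sum.inl (⟨1, by omega⟩ : Fin l))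
      + Lmul l (gen l (Sum.inr (⟨0, by omega⟩ : Fin l))) * Lmul l (gen l (Sum.inr (⟨1, by omega⟩ : Fin l))) * pd (Sum.inl (⟨3, by omega⟩ : Fin l)) := by
    rw [hamEta3 hpd _ _ _ (by simp [Fin.ext_iff]) (by simp [Fin.ext_iff]) (by simp [Fin.ext_iff])]
    simp only [etav, Lmul_mul, Module.End.mul_eq_comp]
  have r1 : Lmul l (gen l (Sum.inr (⟨1, by omega⟩ : Fin l))) * Lmul l (gen l (Sum.inr (⟨0, by omega⟩ : Fin l))) = -(Lmul l (gen l (Sum.inr (⟨0, by omega⟩ : Fin l))) * Lmul l (gen l (Sum.inr (⟨1, by omega⟩ : Fin l)))) := relLL _ _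
  have r2 : Lmul l (gen l (Sum.inr (⟨2, by omega⟩ : Fin l))) * Lmul l (gen l (Sum.inr (⟨0, by omega⟩ : Fin l))) = -(Lmul l (gen l (Sum.inr (⟨0, by omega⟩ : Fin l))) * Lmul l (gen l (Sum.inr (⟨2, by omega⟩ : Fin l)))) := relLL _ _
  have r3 : Lmul l (gen l (Sum.inr (⟨2, by omega⟩ : Fin l))) * Lmul l (gen l (Sum.inr (⟨1, by omega⟩ : Fin l))) = -(Lmul l (gen l (Sum.inr (⟨1, by omega⟩ : Fin l))) * Lmul l (gen l (Sum.inr (⟨2, by omega⟩ : Fin l)))) := relLL _ _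
  have r4 : Lmul l (gen l (Sum.inr (⟨3, by omega⟩ : Fin l))) * Lmul l (gen l (Sum.inr (⟨0, by omega⟩ : Fin l))) = -(Lmul l (gen l (Sum.inr (⟨0, by omega⟩ : Fin l))) * Lmul l (gen l (Sum.inr (⟨3, by omega⟩ : Fin l)))) := relLL _ _
  have r5 : Lmul l (gen l (Sum.inr (⟨3, by omega⟩ : Fin l))) * Lmul l (gen l (Sum.inr (⟨1, by omega⟩ : Fin l))) = -(Lmul l (gen l (Sum.inr (⟨1, by omega⟩ : Fin l))) * Lmul l (gen l (Sum.inr (⟨3, by omega⟩ : Fin l)))) := relLL _ _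
  have r6 : Lmul l (gen l (Sum.inr (⟨3, by omega⟩ : Fin l))) * Lmul l (gen l (Sum.inr (⟨2, by omega⟩ : Fin l))) = -(Lmul l (gen l (Sum.inr (⟨2, by omega⟩ : Fin l))) * Lmul l (gen l (Sum.inr (⟨3, by omega⟩ : Fin l)))) := relLL _ _
  have r7 : Lmul l (gen l (Sum.inl (⟨2, by omega⟩ : Fin l))) * Lmul l (gen l (Sum.inr (⟨0, by omega⟩ : Fin l))) = -(Lmul l (gen l (Sum.inr (⟨0, by omega⟩ : Fin l))) * Lmul l (gen l (Sum.inl (⟨2, by omega⟩ : Fin l)))) := relLL _ _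
  have r8 : Lmul l (gen l (Sum.inl (⟨2, by omega⟩ : Fin l))) * Lmul l (gen l (Sum.inr (⟨1, by omega⟩ : Fin l))) = -(Lmul l (gen l (Sum.inr (⟨1, by omega⟩ : Fin l))) * Lmul l (gen l (Sum.inl (⟨2, by omega⟩ : Fin l)))) := relLL _ _
  have r9 : Lmul l (gen l (Sum.inl (⟨2, by omega⟩ : Fin l))) * Lmul l (gen l (Sum.inr (⟨2, by omega⟩ : Fin l))) = -(Lmul l (gen l (Sum.inr (⟨2, by omega⟩ : Fin l))) * Lmul l (gen l (Sum.inl (⟨2, by omega⟩ : Fin l)))) := relLL _ _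
  have r10 : Lmul l (gen l (Sum.inl (⟨2, by omega⟩ : Fin l))) * Lmul l (gen l (Sum.inr (⟨3, by omega⟩ : Fin l))) = -(Lmul l (gen l (Sum.inr (⟨3, by omega⟩ : Fin l))) * Lmul l (gen l (Sum.inl (⟨2, by omega⟩ : Fin l)))) := relLL _ _
  have r11 : Lmul l (gen l (Sum.inr (⟨0, by omega⟩ : Fin l))) * Lmul l (gen l (Sum.inr (⟨0, by omega⟩ : Fin l))) = 0 := sqL _
  have r12 : Lmul l (gen l (Sum.inr (⟨1, by omega⟩ : Fin l))) * Lmul l (gen l (Sum.inr (⟨1, by omega⟩ : Fin l))) = 0 := sqL _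
  have r13 : Lmul l (gen l (Sum.inr (⟨2, by omega⟩ : Fin l))) * Lmul l (gen l (Sum.inr (⟨2, by omega⟩ : Fin l))) = 0 := sqL _
  have r14 : Lmul l (gen l (Sum.inr (⟨3, by omega⟩ : Fin l))) * Lmul l (gen l (Sum.inr (⟨3, by omega⟩ : Fin l))) = 0 := sqL _
  have r15 : Lmul l (gen l (Sum.inl (⟨2, by omega⟩ : Fin l))) * Lmul l (gen l (Sum.inl (⟨2, by omega⟩ : Fin l))) = 0 := sqL _
  have r16 : pd (Sum.inr (⟨2, by omega⟩ : Fin l)) * Lmul l (gen l (Sum.inr (⟨0, by omega⟩ : Fin l))) = -(Lmul l (gen l (Sum.inr (⟨0, by omega⟩ : Fin l))) * pd (Sum.inr (⟨2, by omega⟩ : Fin l))) := by rw [relPL hpd, if_neg (by simp [Fin.ext_iff]), zero_sub]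
  have r17 : pd (Sum.inr (⟨2, by omega⟩ : Fin l)) * Lmul l (gen l (Sum.inr (⟨1, by omega⟩ : Fin l))) = -(Lmul l (gen l (Sum.inr (⟨1, by omega⟩ : Fin l))) * pd (Sum.inr (⟨2, by omega⟩ : Fin l))) := by rw [relPL hpd, if_neg (by simp [Fin.ext_iff]), zero_sub]
  have r18 : pd (Sum.inr (⟨2, by omega⟩ : Fin l)) * Lmul l (gen l (Sum.inr (⟨2, by omega⟩ : Fin l))) = 1 - Lmul l (gen l (Sum.inr (⟨2, by omega⟩ : Fin l))) * pd (Sum.inr (⟨2, by omega⟩ : Fin l)) := by rw [relPL hpd, if_pos rfl]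
  have r19 : pd (Sum.inr (⟨2, by omega⟩ : Fin l)) * Lmul l (gen l (Sum.inr (⟨3, by omega⟩ : Fin l))) = -(Lmul l (gen l (Sum.inr (⟨3, by omega⟩ : Fin l))) * pd (Sum.inr (⟨2, by omega⟩ : Fin l))) := by rw [relPL hpd, if_neg (by simp [Fin.ext_iff]), zero_sub]
  have r20 : pd (Sum.inr (⟨2, by omega⟩ : Fin l)) * Lmul l (gen l (Sum.inl (⟨2, by omega⟩ : Fin l))) = -(Lmul l (gen l (Sum.inl (⟨2, by omega⟩ : Fin l))) * pd (Sum.inr (⟨2, by omega⟩ : Fin l))) := by rw [relPL hpd, if_neg (by simp [Fin.ext_iff]), zero_sub]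
  have r21 : pd (Sum.inl (⟨0, by omega⟩ : Fin l)) * Lmul l (gen l (Sum.inr (⟨0, by omega⟩ : Fin l))) = -(Lmul l (gen l (Sum.inr (⟨0, by omega⟩ : Fin l))) * pd (Sum.inl (⟨0, by omega⟩ : Fin l))) := by rw [relPL hpd, if_neg (by simp [Fin.ext_iff]), zero_sub]
  have r22 : pd (Sum.inl (⟨0, by omega⟩ : Fin l)) * Lmul l (gen l (Sum.inr (⟨1, by omega⟩ : Fin l))) = -(Lmul l (gen l (Sum.inr (⟨1, by omega⟩ : Fin l))) * pd (Sum.inl (⟨0, by omega⟩ : Fin l))) := by rw [relPL hpd, if_neg (by simp [Fin.ext_iff]), zero_sub]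
  have r23 : pd (Sum.inl (⟨0, by omega⟩ : Fin l)) * Lmul l (gen l (Sum.inr (⟨2, by omega⟩ : Fin l))) = -(Lmul l (gen l (Sum.inr (⟨2, by omega⟩ : Fin l))) * pd (Sum.inl (⟨0, by omega⟩ : Fin l))) := by rw [relPL hpd, if_neg (by simp [Fin.ext_iff]), zero_sub]
  have r24 : pd (Sum.inl (⟨0, by omega⟩ : Fin l)) * Lmul l (gen l (Sum.inr (⟨3, by omega⟩ : Fin l))) = -(Lmul l (gen l (Sum.inr (⟨3, by omega⟩ : Fin l))) * pd (Sum.inl (⟨0, by omega⟩ : Fin l))) := by rw [relPL hpd, if_neg (by simp [Fin.ext_iff]), zero_sub]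
  have r25 : pd (Sum.inl (⟨0, by omega⟩ : Fin l)) * Lmul l (gen l (Sum.inl (⟨2, by omega⟩ : Fin l))) = -(Lmul l (gen l (Sum.inl (⟨2, by omega⟩ : Fin l))) * pd (Sum.inl (⟨0, by omega⟩ : Fin l))) := by rw [relPL hpd, if_neg (by simp [Fin.ext_iff]), zero_sub]
  have r26 : pd (Sum.inl (⟨1, by omega⟩ : Fin l)) * Lmul l (gen l (Sum.inr (⟨0, by omega⟩ : Fin l))) = -(Lmul l (gen l (Sum.inr (⟨0, by omega⟩ : Fin l))) * pd (Sum.inl (⟨1, by omega⟩ : Fin l))) := by rw [relPL hpd, if_neg (by simp [Fin.ext_iff]), zero_sub]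
  have r27 : pd (Sum.inl (⟨1, by omega⟩ : Fin l)) * Lmul l (gen l (Sum.inr (⟨1, by omega⟩ : Fin l))) = -(Lmul l (gen l (Sum.inr (⟨1, by omega⟩ : Fin l))) * pd (Sum.inl (⟨1, by omega⟩ : Fin l))) := by rw [relPL hpd, if_neg (by simp [Fin.ext_iff]), zero_sub]
  have r28 : pd (Sum.inl (⟨1, by omega⟩ : Fin l)) * Lmul l (gen l (Sum.inr (⟨2, by omega⟩ : Fin l))) = -(Lmul l (gen l (Sum.inr (⟨2, by omega⟩ : Fin l))) * pd (Sum.inl (⟨1, by omega⟩ : Fin l))) := by rw [relPL hpd, if_neg (by simp [Fin.ext_iff]), zero_sub]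
  have r29 : pd (Sum.inl (⟨1, by omega⟩ : Fin l)) * Lmul l (gen l (Sum.inr (⟨3, by omega⟩ : Fin l))) = -(Lmul l (gen l (Sum.inr (⟨3, by omega⟩ : Fin l))) * pd (Sum.inl (⟨1, by omega⟩ : Fin l))) := by rw [relPL hpd, if_neg (by simp [Fin.ext_iff]), zero_sub]
  have r30 : pd (Sum.inl (⟨1, by omega⟩ : Fin l)) * Lmul l (gen l (Sum.inl (⟨2, by omega⟩ : Fin l))) = -(Lmul l (gen l (Sum.inl (⟨2, by omega⟩ : Fin l))) * pd (Sum.inl (⟨1, by omega⟩ : Fin l))) := by rw [relPL hpd, if_neg (by simp [Fin.ext_iff]), zero_sub]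
  have r31 : pd (Sum.inl (⟨2, by omega⟩ : Fin l)) * Lmul l (gen l (Sum.inr (⟨0, by omega⟩ : Fin l))) = -(Lmul l (gen l (Sum.inr (⟨0, by omega⟩ : Fin l))) * pd (Sum.inl (⟨2, by omega⟩ : Fin l))) := by rw [relPL hpd, if_neg (by simp [Fin.ext_iff]), zero_sub]
  have r32 : pd (Sum.inl (⟨2, by omega⟩ : Fin l)) * Lmul l (gen l (Sum.inr (⟨1, by omega⟩ : Fin l))) = -(Lmul l (gen l (Sum.inr (⟨1, by omega⟩ : Fin l))) * pd (Sum.inl (⟨2, by omega⟩ : Fin l))) := by rw [relPL hpd, if_neg (by simp [Fin.ext_iff]), zero_sub]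
  have r33 : pd (Sum.inl (⟨2, by omega⟩ : Fin l)) * Lmul l (gen l (Sum.inr (⟨2, by omega⟩ : Fin l))) = -(Lmul l (gen l (Sum.inr (⟨2, by omega⟩ : Fin l))) * pd (Sum.inl (⟨2, by omega⟩ : Fin l))) := by rw [relPL hpd, if_neg (by simp [Fin.ext_iff]), zero_sub]
  have r34 : pd (Sum.inl (⟨2, by omega⟩ : Fin l)) * Lmul l (gen l (Sum.inr (⟨3, by omega⟩ : Fin l))) = -(Lmul l (gen l (Sum.inr (⟨3, by omega⟩ : Fin l))) * pd (Sum.inl (⟨2, by omega⟩ : Fin l))) := by rw [relPL hpd, if_neg (by simp [Fin.ext_iff]), zero_sub]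
  have r35 : pd (Sum.inl (⟨2, by omega⟩ : Fin l)) * Lmul l (gen l (Sum.inl (⟨2, by omega⟩ : Fin l))) = 1 - Lmul l (gen l (Sum.inl (⟨2, by omega⟩ : Fin l))) * pd (Sum.inl (⟨2, by omega⟩ : Fin l)) := by rw [relPL hpd, if_pos rfl]
  have r36 : pd (Sum.inl (⟨3, by omega⟩ : Fin l)) * Lmul l (gen l (Sum.inr (⟨0, by omega⟩ : Fin l))) = -(Lmul l (gen l (Sum.inr (⟨0, by omega⟩ : Fin l))) * pd (Sum.inl (⟨3, by omega⟩ : Fin l))) := by rw [relPL hpd, if_neg (by simp [Fin.ext_iff]), zero_sub]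
  have r37 : pd (Sum.inl (⟨3, by omega⟩ : Fin l)) * Lmul l (gen l (Sum.inr (⟨1, by omega⟩ : Fin l))) = -(Lmul l (gen l (Sum.inr (⟨1, by omega⟩ : Fin l))) * pd (Sum.inl (⟨3, by omega⟩ : Fin l))) := by rw [relPL hpd, if_neg (by simp [Fin.ext_iff]), zero_sub]
  have r38 : pd (Sum.inl (⟨3, by omega⟩ : Fin l)) * Lmul l (gen l (Sum.inr (⟨2, by omega⟩ : Fin l))) = -(Lmul l (gen l (Sum.inr (⟨2, by omega⟩ : Fin l))) * pd (Sum.inl (⟨3, by omega⟩ : Fin l))) := by rw [relPL hpd, if_neg (by simp [Fin.ext_iff]), zero_sub]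
  have r39 : pd (Sum.inl (⟨3, by omega⟩ : Fin l)) * Lmul l (gen l (Sum.inr (⟨3, by omega⟩ : Fin l))) = -(Lmul l (gen l (Sum.inr (⟨3, by omega⟩ : Fin l))) * pd (Sum.inl (⟨3, by omega⟩ : Fin l))) := by rw [relPL hpd, if_neg (by simp [Fin.ext_iff]), zero_sub]
  have r40 : pd (Sum.inl (⟨3, by omega⟩ : Fin l)) * Lmul l (gen l (Sum.inl (⟨2, by omega⟩ : Fin l))) = -(Lmul l (gen l (Sum.inl (⟨2, by omega⟩ : Fin l))) * pd (Sum.inl (⟨3, by omega⟩ : Fin l))) := by rw [relPL hpd, if_neg (by simp [Fin.ext_iff]), zero_sub]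
  have r41 : pd (Sum.inl (⟨0, by omega⟩ : Fin l)) * pd (Sum.inr (⟨2, by omega⟩ : Fin l)) = -(pd (Sum.inr (⟨2, by omega⟩ : Fin l)) * pd (Sum.inl (⟨0, by omega⟩ : Fin l))) := relPP hpd _ _
  have r42 : pd (Sum.inl (⟨1, by omega⟩ : Fin l)) * pd (Sum.inr (⟨2, by omega⟩ : Fin l)) = -(pd (Sum.inr (⟨2, by omega⟩ : Fin l)) * pd (Sum.inl (⟨1, by omega⟩ : Fin l))) := relPP hpd _ _
  have r43 : pd (Sum.inl (⟨1, by omega⟩ : Fin l)) * pd (Sum.inl (⟨0, by omega⟩ : Fin l)) = -(pd (Sum.inl (⟨0, by omega⟩ : Fin l)) * pd (Sum.inl (⟨1, by omega⟩ : Fin l))) := relPP hpd _ _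
  have r44 : pd (Sum.inl (⟨2, by omega⟩ : Fin l)) * pd (Sum.inr (⟨2, by omega⟩ : Fin l)) = -(pd (Sum.inr (⟨2, by omega⟩ : Fin l)) * pd (Sum.inl (⟨2, by omega⟩ : Fin l))) := relPP hpd _ _
  have r45 : pd (Sum.inl (⟨2, by omega⟩ : Fin l)) * pd (Sum.inl (⟨0, by omega⟩ : Fin l)) = -(pd (Sum.inl (⟨0, by omega⟩ : Fin l)) * pd (Sum.inl (⟨2, by omega⟩ : Fin l))) := relPP hpd _ _
  have r46 : pd (Sum.inl (⟨2, by omega⟩ : Fin l)) * pd (Sum.inl (⟨1, by omega⟩ : Fin l)) = -(pd (Sum.inl (⟨1, by omega⟩ : Fin l)) * pd (Sum.inl (⟨2, by omega⟩ : Fin l))) := relPP hpd _ _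
  have r47 : pd (Sum.inl (⟨3, by omega⟩ : Fin l)) * pd (Sum.inr (⟨2, by omega⟩ : Fin l)) = -(pd (Sum.inr (⟨2, by omega⟩ : Fin l)) * pd (Sum.inl (⟨3, by omega⟩ : Fin l))) := relPP hpd _ _
  have r48 : pd (Sum.inl (⟨3, by omega⟩ : Fin l)) * pd (Sum.inl (⟨0, by omega⟩ : Fin l)) = -(pd (Sum.inl (⟨0, by omega⟩ : Fin l)) * pd (Sum.inl (⟨3, by omega⟩ : Fin l))) := relPP hpd _ _
  have r49 : pd (Sum.inl (⟨3, by omega⟩ : Fin l)) * pd (Sum.inl (⟨1, by omega⟩ : Fin l)) = -(pd (Sum.inl (⟨1, by omega⟩ : Fin l)) * pd (Sum.inl (⟨3, by omega⟩ : Fin l))) := relPP hpd _ _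
  have r50 : pd (Sum.inl (⟨3, by omega⟩ : Fin l)) * pd (Sum.inl (⟨2, by omega⟩ : Fin l)) = -(pd (Sum.inl (⟨2, by omega⟩ : Fin l)) * pd (Sum.inl (⟨3, by omega⟩ : Fin l))) := relPP hpd _ _
  have r51 : pd (Sum.inr (⟨2, by omega⟩ : Fin l)) * pd (Sum.inr (⟨2, by omega⟩ : Fin l)) = 0 := sqP hpd _
  have r52 : pd (Sum.inl (⟨0, by omega⟩ : Fin l)) * pd (Sum.inl (⟨0, by omega⟩ : Fin l)) = 0 := sqP hpd _
  have r53 : pd (Sum.inl (⟨1, by omega⟩ : Fin l)) * pd (Sum.inl (⟨1, by omega⟩ : Fin l)) = 0 := sqP hpd _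
  have r54 : pd (Sum.inl (⟨2, by omega⟩ : Fin l)) * pd (Sum.inl (⟨2, by omega⟩ : Fin l)) = 0 := sqP hpd _
  have r55 : pd (Sum.inl (⟨3, by omega⟩ : Fin l)) * pd (Sum.inl (⟨3, by omega⟩ : Fin l)) = 0 := sqP hpd _
  have e1 : ∀ a b c : Module.End ℂ (Lam l), a * (b - c) = a * b - a * c := fun a b c => mul_sub a b c
  have e2 : ∀ a b c : Module.End ℂ (Lam l), (a - b) * c = a * c - b * c := fun a b c => sub_mul a b c
  have e3 : ∀ a b : Module.End ℂ (Lam l), a * -b = -(a * b) := fun a b => mul_neg a b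
  have e4 : ∀ a b : Module.End ℂ (Lam l), -a * b = -(a * b) := fun a b => neg_mul a b
  have e5 : ∀ a : Module.End ℂ (Lam l), - -a = a := fun a => neg_neg a
  refine ⟨by rw [hXn]; rfl, ?_, ?_⟩
  · rw [hEn]
    simp only [show ∀ f g : Module.End ℂ (Lam l), f ∘ₗ g = f * g from fun _ _ => rfl, hXn, hDn]
    simp only [mul_sub, sub_mul, mul_add, add_mul, mul_neg, neg_mul, neg_neg, mul_assoc, e1, e2, e3, e4, e5,
      r1, r2, r3, r4, r5, r6, r7, r8, r9, r10, r11, r12, r13, r14, r15, r16, r17, r18, r19, r20, r21, r22, r23, r24, r25, r26, r27, r28, r29, r30, r31, r32, r33, r34, r35, r36, r37, r38, r39, r40, r41, r42, r43, r44, r45, r46, r47, r48, r49, r50, r51, r52, r53, r54, r55, swap3 r1, swap3 r2, swap3 r3, swap3 r4, swap3 r5, swap3 r6, swap3 r7, swap3 r8, swap3 r9, swap3 r10, sq3 r11, sq3 r12, sq3 r13, sq3 r14, sq3 r15, swap3 r16, swap3 r17, unit3 r18, swap3 r19, swap3 r20, swap3 r21, swap3 r22, swap3 r23, swap3 r24,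 swap3 r25, swap3 r26, swap3 r27, swap3 r28, swap3 r29, swap3 r30, swap3 r31, swap3 r32, swap3 r33, swap3 r34, unit3 r35, swap3 r36, swap3 r37, swap3 r38, swap3 r39, swap3 r40, swap3 r41, swap3 r42, swap3 r43, swap3 r44, swap3 r45, swap3 r46, swap3 r47, swap3 r48, swap3 r49, swap3 r50, sq3 r51, sq3 r52, sq3 r53, sq3 r54, sq3 r55,
      mul_one, one_mul, mul_zero, zero_mul, add_zero, zero_add, sub_zero, zero_sub, neg_zero]
    abel
  · simp only [show ∀ f g : Module.End ℂ (Lam l), f ∘ₗ g = f * g from fun _ _ => rfl, hXn, hDn]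
    simp only [mul_sub, sub_mul, mul_add, add_mul, mul_neg, neg_mul, neg_neg, mul_assoc, e1, e2, e3, e4, e5,
      r1, r2, r3, r4, r5, r6, r7, r8, r9, r10, r11, r12, r13, r14, r15, r16, r17, r18, r19, r20, r21, r22, r23, r24, r25, r26, r27, r28, r29, r30, r31, r32, r33, r34, r35, r36, r37, r38, r39, r40, r41, r42, r43, r44, r45, r46, r47, r48, r49, r50, r51, r52, r53, r54, r55, swap3 r1, swap3 r2, swap3 r3, swap3 r4, swap3 r5, swap3 r6, swap3 r7, swap3 r8, swap3 r9, swap3 r10, sq3 r11, sq3 r12, sq3 r13, sq3 r14, sq3 r15, swap3 r16, swap3 r17, unit3 r18, swap3 r19, swap3 r20, swap3 r21, swap3 r22, swap3 r23, swap3 r24, swap3 r25, swap3 r26, swap3 r27, swap3 r28, swap3 r29, swap3 r30, swap3 r31, swap3 r32, swap3 r33, swap3 r34, unit3 r35, swap3 r36, swap3 r37, swap3 r38, swap3 r39, swap3 r40, swap3 r41, swap3 r42, swap3 r43, swap3 r44, swap3 r45, swap3 r46, swap3 r47, swap3 r48, swap3 r49, swap3 r50, sq3 r51, sq3 r52, sq3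 r53, sq3 r54, sq3 r55,
      mul_one, one_mul, mul_zero, zero_mul, add_zero, zero_add, sub_zero, zero_sub, neg_zero]
    abel
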